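/- Let (E, F) be a resistance form on a set X whose resistance metric R is complete and such that (X,R) is doubling. Then there exists C > 0 such that 𝓡(cl(B_R(x,r)), X∖B_R(x,2r)) ≥ C·r for every x ∈ X and r > 0. -/

import Mathlib

open Filter Set Metric
open scoped ENNReal Topology

/-- A resistance form `(E, F)` on a set `X` (Kigami):
`F` is a linear subspace of the real-valued functions on `X`, `E` is a nonnegative
symmetric bilinear form on `F` such that (RF1) constants belong to `F` and
`E(u,u) = 0` iff `u` is constant, (RF2) the quotient of `F` by the constants is a
Hilbert space under `E` (stated as completeness of the `E`-seminorm on `F`),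
(RF3) points of `X` are separated by `F`, (RF4) for `x ≠ y` the quantity
`R(x,y) = (inf {E(u,u) : u ∈ F, u x = 1, u y = 0})⁻¹` is finite (i.e. the infimum
is positive; an admissible `u` always exists), and (RF5) the Markov property holds
for the unit truncation. -/
structure ResistanceForm (X : Type*) where
  F : Set (X → ℝ)
  E : (X → ℝ) → (X → ℝ) → ℝ
  zero_mem : (0 : X → ℝ) ∈ F
  add_mem : ∀ {u v : X → ℝ}, u ∈ F → v ∈ F → u + v ∈ F
  smul_mem : ∀ (c : ℝ) {u : X → ℝ}, u ∈ F → c • u ∈ F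
  const_mem : ∀ c : ℝ, (fun _ => c) ∈ F
  symm : ∀ u ∈ F, ∀ v ∈ F, E u v = E v u
  add_left : ∀ u ∈ F, ∀ v ∈ F, ∀ w ∈ F, E (u + v) w = E u w + E v w
  smul_left : ∀ (c : ℝ), ∀ u ∈ F, ∀ v ∈ F, E (c • u) v = c * E u v
  nonneg : ∀ u ∈ F, 0 ≤ E u u
  null_iff_const : ∀ u ∈ F, (E u u = 0 ↔ ∃ c : ℝ, ∀ x, u x = c)
  complete : ∀ u : ℕ → (X → ℝ), (∀ n, u n ∈ F) →
    (∀ ε : ℝ, 0 < ε → ∃ N : ℕ, ∀ m ≥ N, ∀ n ≥ N, E (u m - u n) (u m - u n) < ε) →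
    ∃ v ∈ F, ∀ ε : ℝ, 0 < ε → ∃ N : ℕ, ∀ n ≥ N, E (v - u n) (v - u n) < ε
  sep : ∀ x y : X, x ≠ y → ∃ u ∈ F, u x ≠ u y
  exists_unit : ∀ x y : X, x ≠ y → ∃ u ∈ F, u x = 1 ∧ u y = 0
  inf_pos : ∀ x y : X, x ≠ y →
    0 < sInf {e : ℝ | ∃ u ∈ F, u x = 1 ∧ u y = 0 ∧ E u u = e}
  markov : ∀ u ∈ F, (fun x => max 0 (min 1 (u x))) ∈ F ∧
    E (fun x => max 0 (min 1 (u x))) (fun x => max 0 (min 1 (u x))) ≤ E u u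

namespace ResistanceForm

variable {X : Type*}

open Classical in
/-- The resistance metric `R` associated with a resistance form:
`R(x,x) = 0` and `R(x,y) = (inf {E(u,u) : u ∈ F, u x = 1, u y = 0})⁻¹` for `x ≠ y`. -/
noncomputable def rmetric (rf : ResistanceForm X) (x y : X) : ℝ :=
  if x = y then 0
  else (sInf {e : ℝ | ∃ u ∈ rf.F, u x = 1 ∧ u y = 0 ∧ rf.E u u = e})⁻¹

open Classical in
/-- The resistance `𝓡(A,B)` between two sets: the reciprocal of the minimal energy of
functions that are `≡ 1` on `A` and `≡ 0` on `B` if such functions exist, `0` if no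
such function exists, and `∞` if `A` or `B` is empty. -/
noncomputable def setRes (rf : ResistanceForm X) (A B : Set X) : ℝ≥0∞ :=
  if A.Nonempty ∧ B.Nonempty then
    (if ∃ u ∈ rf.F, (∀ x ∈ A, u x = 1) ∧ (∀ x ∈ B, u x = 0) then
      (ENNReal.ofReal
        (sInf {e : ℝ | ∃ u ∈ rf.F, (∀ x ∈ A, u x = 1) ∧ (∀ x ∈ B, u x = 0) ∧ rf.E u u = e}))⁻¹
    else 0)
  else ⊤

end ResistanceForm

/-- A distance function `ρ` on `X` is doubling: there is `N ∈ ℕ` such that every ball of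
radius `2r` is covered by `N` balls of radius `r`. -/
def DoublingOf {X : Type*} (ρ : X → X → ℝ) : Prop :=
  ∃ N : ℕ, ∀ (x : X) (r : ℝ), ∃ s : Finset X, s.card ≤ N ∧
    {y : X | ρ x y < 2 * r} ⊆ ⋃ z ∈ s, {y : X | ρ z y < r}

/-- A distance function `ρ` on `X` is uniformly perfect: there is `γ > 1` such that
`B(x, γ r) \ B(x, r) ≠ ∅` whenever `B(x,r)` is not the whole space. -/
def UniformlyPerfectOf {X : Type*} (ρ : X → X → ℝ) : Prop :=
  ∃ γ : ℝ, 1 < γ ∧ ∀ (x : X) (r : ℝ), 0 < r → {y : X | ρ x y < r} ≠ Set.univ →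
    ({y : X | ρ x y < γ * r} \ {y : X | ρ x y < r}).Nonempty

namespace ResistanceForm
variable {X : Type*} (rf : ResistanceForm X)

lemma sub_mem {u v : X → ℝ} (hu : u ∈ rf.F) (hv : v ∈ rf.F) : u - v ∈ rf.F := by
  have : u - v = u + (-1 : ℝ) • v := by
    funext y; simp [sub_eq_add_neg]
  rw [this]; exact rf.add_mem hu (rf.smul_mem _ hv)

lemma neg_mem {u : X → ℝ} (hu : u ∈ rf.F) : -u ∈ rf.F := by
  have : -u = (-1 : ℝ) • u := by funext y; simp
  rw [this]; exact rf.smul_mem _ hu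

lemma add_right {u v w : X → ℝ} (hu : u ∈ rf.F) (hv : v ∈ rf.F) (hw : w ∈ rf.F) :
    rf.E u (v + w) = rf.E u v + rf.E u w := by
  rw [rf.symm u hu _ (rf.add_mem hv hw), rf.add_left v hv w hw u hu,
    rf.symm v hv u hu, rf.symm w hw u hu]

lemma smul_right (c : ℝ) {u v : X → ℝ} (hu : u ∈ rf.F) (hv : v ∈ rf.F) :
    rf.E u (c • v) = c * rf.E u v := by
  rw [rf.symm u hu _ (rf.smul_mem c hv), rf.smul_left c v hv u hu, rf.symm v hv u hu]

lemma E_zero : rf.E 0 0 = 0 := by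
  have h := rf.smul_left 0 0 rf.zero_mem 0 rf.zero_mem
  simpa using h

lemma E_expand {u v : X → ℝ} (hu : u ∈ rf.F) (hv : v ∈ rf.F) :
    rf.E (u + v) (u + v) = rf.E u u + 2 * rf.E u v + rf.E v v := by
  rw [rf.add_left u hu v hv _ (rf.add_mem hu hv), rf.add_right hu hu hv,
    rf.add_right hv hu hv, rf.symm v hv u hu]; ring

lemma E_smul_self (c : ℝ) {u : X → ℝ} (hu : u ∈ rf.F) :
    rf.E (c • u) (c • u) = c ^ 2 * rf.E u u := by
  rw [rf.smul_left c u hu _ (rf.smul_mem c hu), rf.smul_right c hu hu]; ring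

lemma E_const (c : ℝ) : rf.E (fun _ => c) (fun _ => c) = 0 :=
  (rf.null_iff_const _ (rf.const_mem c)).2 ⟨c, fun _ => rfl⟩

lemma linear_nonneg_zero {A B : ℝ} (h : ∀ t : ℝ, 0 ≤ A + 2 * t * B) : B = 0 := by
  by_contra hB
  have key : A + 2 * (-(A + 1) / (2 * B)) * B = -1 := by
    field_simp
    ring
  linarith [h (-(A + 1) / (2 * B)), key]

lemma E_cross_const {u : X → ℝ} (hu : u ∈ rf.F) (c : ℝ) :
    rf.E u (fun _ => c) = 0 := by
  have hone : (fun (_ : X) => (1:ℝ)) ∈ rf.F := rf.const_mem 1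
  have key : rf.E u (fun _ => (1:ℝ)) = 0 := by
    apply linear_nonneg_zero (A := rf.E u u)
    intro t
    have hmem : u + t • (fun _ => (1:ℝ)) ∈ rf.F := rf.add_mem hu (rf.smul_mem _ hone)
    have h0 := rf.nonneg _ hmem
    rw [rf.E_expand hu (rf.smul_mem t hone), rf.smul_right t hu hone,
      rf.E_smul_self t hone, rf.E_const] at h0
    nlinarith [h0]
  have hc : (fun (_ : X) => c) = c • (fun (_ : X) => (1:ℝ)) := by
    funext y
    show c = c * 1
    rw [mul_one]
  rw [hc, rf.smul_right c hu hone, key, mul_zero]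

lemma E_add_const {u : X → ℝ} (hu : u ∈ rf.F) (c : ℝ) :
    rf.E (u + fun _ => c) (u + fun _ => c) = rf.E u u := by
  rw [rf.E_expand hu (rf.const_mem c), rf.E_cross_const hu, rf.E_const]; ring

lemma E_sub_symm {u v : X → ℝ} (hu : u ∈ rf.F) (hv : v ∈ rf.F) :
    rf.E (u - v) (u - v) = rf.E (v - u) (v - u) := by
  have h : v - u = (-1 : ℝ) • (u - v) := by funext y; simp [sub_eq_add_neg]
  rw [h, rf.E_smul_self _ (rf.sub_mem hu hv)]; ring

lemma cauchy_schwarz {u v : X → ℝ} (hu : u ∈ rf.F) (hv : v ∈ rf.F) :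
    rf.E u v ^ 2 ≤ rf.E u u * rf.E v v := by
  rcases eq_or_lt_of_le (rf.nonneg v hv) with hv0 | hv0
  · have huv : rf.E u v = 0 := by
      apply linear_nonneg_zero (A := rf.E u u)
      intro t
      have hmem : u + t • v ∈ rf.F := rf.add_mem hu (rf.smul_mem _ hv)
      have h0 := rf.nonneg _ hmem
      rw [rf.E_expand hu (rf.smul_mem t hv), rf.smul_right t hu hv,
        rf.E_smul_self t hv, ← hv0] at h0
      nlinarith [h0]
    rw [huv, ← hv0]; norm_num
  · set t : ℝ := -(rf.E u v) / rf.E v v with ht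
    have hmem : u + t • v ∈ rf.F := rf.add_mem hu (rf.smul_mem _ hv)
    have h0 := rf.nonneg _ hmem
    rw [rf.E_expand hu (rf.smul_mem t hv), rf.smul_right t hu hv,
      rf.E_smul_self t hv] at h0
    have hvne : rf.E v v ≠ 0 := ne_of_gt hv0
    have h1 : t * rf.E v v = -(rf.E u v) := by rw [ht]; field_simp
    have h3 : (t * rf.E v v) ^ 2 = rf.E u v ^ 2 := by rw [h1]; ring
    have h2 := mul_nonneg (le_of_lt hv0) h0
    nlinarith [h2, h1, h3]

noncomputable def nm (u : X → ℝ) : ℝ := Real.sqrt (rf.E u u)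

lemma nm_nonneg (u : X → ℝ) : 0 ≤ rf.nm u := Real.sqrt_nonneg _

lemma nm_sq {u : X → ℝ} (hu : u ∈ rf.F) : rf.nm u ^ 2 = rf.E u u :=
  Real.sq_sqrt (rf.nonneg u hu)

lemma E_le_sq_of_nm_le {u : X → ℝ} (hu : u ∈ rf.F) {b : ℝ} (h : rf.nm u ≤ b) :
    rf.E u u ≤ b ^ 2 := by
  have := rf.nm_sq hu
  nlinarith [rf.nm_nonneg u]

lemma nm_le_of_E_le_sq {u : X → ℝ} {b : ℝ} (hb : 0 ≤ b) (h : rf.E u u ≤ b ^ 2) :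
    rf.nm u ≤ b := by
  have := Real.sqrt_le_sqrt h
  rwa [Real.sqrt_sq hb] at this

lemma nm_add_le {u v : X → ℝ} (hu : u ∈ rf.F) (hv : v ∈ rf.F) :
    rf.nm (u + v) ≤ rf.nm u + rf.nm v := by
  apply rf.nm_le_of_E_le_sq (add_nonneg (rf.nm_nonneg u) (rf.nm_nonneg v))
  rw [rf.E_expand hu hv]
  have hcs : rf.E u v ≤ rf.nm u * rf.nm v := by
    calc rf.E u v ≤ |rf.E u v| := le_abs_self _
      _ = Real.sqrt (rf.E u v ^ 2) := (Real.sqrt_sq_eq_abs _).symm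
      _ ≤ Real.sqrt (rf.E u u * rf.E v v) := Real.sqrt_le_sqrt (rf.cauchy_schwarz hu hv)
      _ = rf.nm u * rf.nm v := Real.sqrt_mul (rf.nonneg u hu) _
  have e1 := rf.nm_sq hu
  have e2 := rf.nm_sq hv
  nlinarith [hcs]

lemma mem_sum {ι : Type*} {s : Finset ι} {f : ι → X → ℝ} (h : ∀ i ∈ s, f i ∈ rf.F) :
    (∑ i ∈ s, f i) ∈ rf.F := by
  classical
  induction s using Finset.induction with
  | empty => simpa using rf.zero_mem
  | @insert a s' hx ih =>
    rw [Finset.sum_insert hx]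
    exact rf.add_mem (h a (Finset.mem_insert_self a s'))
      (ih fun i hi => h i (Finset.mem_insert_of_mem hi))

lemma nm_zero : rf.nm (0 : X → ℝ) = 0 := by simp [nm, rf.E_zero]

lemma nm_sum_le {ι : Type*} {s : Finset ι} {f : ι → X → ℝ} (h : ∀ i ∈ s, f i ∈ rf.F) :
    rf.nm (∑ i ∈ s, f i) ≤ ∑ i ∈ s, rf.nm (f i) := by
  classical
  induction s using Finset.induction with
  | empty => simp [rf.nm_zero]
  | @insert a s' hx ih =>
    rw [Finset.sum_insert hx, Finset.sum_insert hx]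
    calc rf.nm (f a + ∑ i ∈ s', f i)
        ≤ rf.nm (f a) + rf.nm (∑ i ∈ s', f i) :=
          rf.nm_add_le (h a (Finset.mem_insert_self a s'))
            (rf.mem_sum fun i hi => h i (Finset.mem_insert_of_mem hi))
      _ ≤ rf.nm (f a) + ∑ i ∈ s', rf.nm (f i) := by
          have := ih fun i hi => h i (Finset.mem_insert_of_mem hi)
          linarith


section Metric
variable [MetricSpace X]

def pairSet (rf : ResistanceForm X) (p q : X) : Set ℝ :=
  {e : ℝ | ∃ u ∈ rf.F, u p = 1 ∧ u q = 0 ∧ rf.E u u = e}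

lemma pairSet_bddBelow (p q : X) : BddBelow (rf.pairSet p q) := by
  refine ⟨0, ?_⟩
  rintro e ⟨u, hu, -, -, rfl⟩
  exact rf.nonneg u hu

lemma sInf_pairSet (hR : ∀ x y : X, dist x y = rf.rmetric x y) {p q : X} (h : p ≠ q) :
    sInf (rf.pairSet p q) = (dist p q)⁻¹ := by
  have h1 : dist p q = (sInf (rf.pairSet p q))⁻¹ := by
    rw [hR p q, rmetric, if_neg h]; rfl
  rw [h1, inv_inv]

lemma holder (hR : ∀ x y : X, dist x y = rf.rmetric x y) {u : X → ℝ} (hu : u ∈ rf.F)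
    (p q : X) : (u p - u q) ^ 2 ≤ dist p q * rf.E u u := by
  rcases eq_or_ne p q with rfl | hpq
  · simp
  rcases eq_or_ne (u p) (u q) with he | he
  · rw [he, sub_self]
    simpa using mul_nonneg dist_nonneg (rf.nonneg u hu)
  · set a : ℝ := u p - u q with ha
    have ha0 : a ≠ 0 := sub_ne_zero.2 he
    set w : X → ℝ := a⁻¹ • (u + fun _ => -(u q)) with hw
    have hwmem : w ∈ rf.F := rf.smul_mem _ (rf.add_mem hu (rf.const_mem _))
    have hwp : w p = 1 := by
      simp only [hw, Pi.smul_apply, Pi.add_apply, smul_eq_mul]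
      rw [← sub_eq_add_neg, ← ha]
      field_simp
    have hwq : w q = 0 := by
      simp only [hw, Pi.smul_apply, Pi.add_apply, smul_eq_mul]
      ring
    have hWE : rf.E w w = (a⁻¹) ^ 2 * rf.E u u := by
      rw [hw, rf.E_smul_self _ (rf.add_mem hu (rf.const_mem _)), rf.E_add_const hu]
    have hmem : rf.E w w ∈ rf.pairSet p q := ⟨w, hwmem, hwp, hwq, rfl⟩
    have hle : (dist p q)⁻¹ ≤ rf.E w w := by
      rw [← rf.sInf_pairSet hR hpq]
      exact csInf_le (rf.pairSet_bddBelow p q) hmem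
    have hd : 0 < dist p q := dist_pos.2 hpq
    have ha2 : 0 < a ^ 2 := by positivity
    rw [hWE] at hle
    have key := mul_le_mul_of_nonneg_left hle (le_of_lt (mul_pos hd ha2))
    have hdne : dist p q ≠ 0 := ne_of_gt hd
    have lhs : dist p q * a ^ 2 * (dist p q)⁻¹ = a ^ 2 := by field_simp; try ring
    have rhs : dist p q * a ^ 2 * (a⁻¹ ^ 2 * rf.E u u) = dist p q * rf.E u u := by
      field_simp; try ring
    rw [lhs, rhs] at key
    exact key

end Metric

end ResistanceForm

namespace RFAux
open ResistanceForm

variable {X : Type*}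

def tr (u : X → ℝ) : X → ℝ := fun x => max 0 (min 1 (u x))

lemma tr_mem (rf : ResistanceForm X) {u : X → ℝ} (hu : u ∈ rf.F) : tr u ∈ rf.F :=
  (rf.markov u hu).1

lemma tr_E_le (rf : ResistanceForm X) {u : X → ℝ} (hu : u ∈ rf.F) :
    rf.E (tr u) (tr u) ≤ rf.E u u := (rf.markov u hu).2

lemma tr_nonneg (u : X → ℝ) (y : X) : 0 ≤ tr u y := le_max_left _ _

lemma tr_le_one (u : X → ℝ) (y : X) : tr u y ≤ 1 := by
  simp only [tr]
  exact max_le (by norm_num) (min_le_left _ _)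

lemma tr_eq_one {u : X → ℝ} {y : X} (h : 1 ≤ u y) : tr u y = 1 := by
  simp only [tr, min_eq_left h, max_eq_right (by norm_num : (0:ℝ) ≤ 1)]

lemma tr_eq_zero {u : X → ℝ} {y : X} (h : u y ≤ 0) : tr u y = 0 := by
  have h1 : min 1 (u y) = u y := min_eq_right (h.trans zero_le_one)
  simp only [tr, h1, max_eq_left h]

variable [MetricSpace X]

lemma near_min (rf : ResistanceForm X) (hR : ∀ x y : X, dist x y = rf.rmetric x y)
    {p q : X} (h : p ≠ q) :
    ∃ ψ ∈ rf.F, (∀ y, 0 ≤ ψ y ∧ ψ y ≤ 1) ∧ ψ p = 1 ∧ ψ q = 0 ∧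
      rf.E ψ ψ ≤ 2 / dist p q := by
  have hd : 0 < dist p q := dist_pos.2 h
  have hne : (rf.pairSet p q).Nonempty := by
    obtain ⟨u, hu, h1, h0⟩ := rf.exists_unit p q h
    exact ⟨rf.E u u, u, hu, h1, h0, rfl⟩
  have hlt : sInf (rf.pairSet p q) < 2 / dist p q := by
    rw [rf.sInf_pairSet hR h, div_eq_mul_inv]
    have : 0 < (dist p q)⁻¹ := by positivity
    linarith
  obtain ⟨e, ⟨u, hu, h1, h0, he⟩, helt⟩ := (csInf_lt_iff (rf.pairSet_bddBelow p q) hne).1 hlt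
  refine ⟨tr u, tr_mem rf hu, fun y => ⟨tr_nonneg u y, tr_le_one u y⟩, ?_, ?_, ?_⟩
  · exact tr_eq_one (by rw [h1])
  · exact tr_eq_zero (by rw [h0])
  · exact le_of_lt (lt_of_le_of_lt (tr_E_le rf hu) (he ▸ helt))

lemma cover_lemma {N : ℕ}
    (hN : ∀ (x : X) (r : ℝ), ∃ s : Finset X, s.card ≤ N ∧
      {y : X | dist x y < 2 * r} ⊆ ⋃ z ∈ s, {y : X | dist z y < r}) :
    ∀ (m : ℕ) (z : X) (ρ : ℝ), ∃ s : Finset X, s.card ≤ N ^ m ∧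
      {y : X | dist z y < 2 ^ m * ρ} ⊆ ⋃ c ∈ s, {y : X | dist c y < ρ} := by
  intro m
  induction m with
  | zero =>
    intro z ρ
    refine ⟨{z}, by simp, ?_⟩
    intro y hy
    simp only [mem_setOf_eq, pow_zero, one_mul] at hy
    simp only [Finset.mem_singleton, Set.mem_iUnion]
    exact ⟨z, rfl, by simpa using hy⟩
  | succ m ih =>
    intro z ρ
    obtain ⟨s₀, hcard₀, hcov₀⟩ := hN z (2 ^ m * ρ)
    classical
    set t : X → Finset X := fun c => (ih c ρ).choose with htdef
    refine ⟨s₀.biUnion t, ?_, ?_⟩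
    · calc (s₀.biUnion t).card ≤ ∑ c ∈ s₀, (t c).card := Finset.card_biUnion_le
        _ ≤ ∑ _c ∈ s₀, N ^ m := Finset.sum_le_sum fun c _ => (ih c ρ).choose_spec.1
        _ = s₀.card * N ^ m := by rw [Finset.sum_const, smul_eq_mul]
        _ ≤ N * N ^ m := Nat.mul_le_mul_right _ hcard₀
        _ = N ^ (m + 1) := by ring
    · intro y hy
      have hy' : y ∈ {y : X | dist z y < 2 * (2 ^ m * ρ)} := by
        simp only [mem_setOf_eq] at hy ⊢
        calc dist z y < 2 ^ (m+1) * ρ := hy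
          _ = 2 * (2 ^ m * ρ) := by ring
      obtain ⟨c, hc, hcy⟩ := by simpa only [Set.mem_iUnion, exists_prop] using hcov₀ hy'
      have h2 := (ih c ρ).choose_spec.2 hcy
      obtain ⟨c', hc', hc'y⟩ := by simpa only [Set.mem_iUnion, exists_prop] using h2
      simp only [Set.mem_iUnion, exists_prop]
      exact ⟨c', Finset.mem_biUnion.2 ⟨c, hc, hc'⟩, hc'y⟩

lemma geo_sum (a b : ℕ) : ∑ k ∈ Finset.Ico a b, ((2:ℝ) ^ k)⁻¹ ≤ 2 * ((2:ℝ) ^ a)⁻¹ := by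
  rcases le_or_gt a b with hab | hab
  · rw [Finset.sum_Ico_eq_sum_range]
    have h1 : ∀ i : ℕ, ((2:ℝ) ^ (a + i))⁻¹ = ((2:ℝ) ^ a)⁻¹ * (1 / 2 : ℝ) ^ i := by
      intro i
      rw [pow_add, mul_inv, one_div, inv_pow]
    calc ∑ i ∈ Finset.range (b - a), ((2:ℝ) ^ (a + i))⁻¹
        = ((2:ℝ) ^ a)⁻¹ * ∑ i ∈ Finset.range (b - a), (1 / 2 : ℝ) ^ i := by
          rw [Finset.mul_sum]; exact Finset.sum_congr rfl fun i _ => h1 i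
      _ ≤ ((2:ℝ) ^ a)⁻¹ * 2 := by
          have h2 := sum_geometric_two_le (b - a)
          have h3 : (0:ℝ) ≤ ((2:ℝ) ^ a)⁻¹ := by positivity
          nlinarith
      _ = 2 * ((2:ℝ) ^ a)⁻¹ := by ring
  · rw [Finset.Ico_eq_empty (by omega), Finset.sum_empty]
    positivity

end RFAux

namespace RFAux
open ResistanceForm
variable {X : Type*} [MetricSpace X]

set_option maxHeartbeats 1000000 in
lemma cutoffA (rf : ResistanceForm X) (hR : ∀ x y : X, dist x y = rf.rmetric x y)
    {N : ℕ}
    (hN : ∀ (x : X) (r : ℝ), ∃ s : Finset X, s.card ≤ N ∧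
      {y : X | dist x y < 2 * r} ⊆ ⋃ z ∈ s, {y : X | dist z y < r})
    (z : X) {ρ : ℝ} (hρ : 0 < ρ) :
    ∃ w ∈ rf.F, (∀ y, 0 ≤ w y ∧ w y ≤ 1) ∧ (∀ y, dist z y ≤ ρ → w y = 1) ∧
      (∀ y, (256 * ((N:ℝ)^7)^2) * ρ ≤ dist z y → w y = 0) ∧ rf.E w w ≤ 1/ρ := by
  classical
  -- N is at least 1
  have hN1 : 1 ≤ N := by
    obtain ⟨s, hcard, hcov⟩ := hN z 1
    have hz : z ∈ {y : X | dist z y < 2 * 1} := by simp [dist_self]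
    obtain ⟨c, hc, -⟩ := by simpa only [Set.mem_iUnion, exists_prop] using hcov hz
    have : 0 < s.card := Finset.card_pos.2 ⟨c, hc⟩
    omega
  set M : ℝ := (N:ℝ)^7 with hMdef
  have hM1 : 1 ≤ M := one_le_pow₀ (by exact_mod_cast hN1)
  have hM0 : 0 < M := lt_of_lt_of_le one_pos hM1
  set Λ : ℝ := 256 * M^2 with hΛdef
  have hΛ0 : 0 < Λ := by positivity
  set s : ℕ → ℝ := fun k => Λ * ρ * 4^k with hsdef
  have hs0 : ∀ k, 0 < s k := fun k => by positivity
  have hsqrtΛρ : 0 < Real.sqrt (Λ * ρ) := Real.sqrt_pos.2 (by positivity)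
  have hsqrts : ∀ k, Real.sqrt (s k) = Real.sqrt (Λ * ρ) * 2^k := by
    intro k
    have h4 : ((4:ℝ))^k = ((2:ℝ)^k)^2 := by
      rw [← pow_mul, mul_comm k 2, pow_mul]; norm_num
    show Real.sqrt (Λ * ρ * 4^k) = Real.sqrt (Λ * ρ) * 2^k
    rw [h4, Real.sqrt_mul (by positivity), Real.sqrt_sq (by positivity)]
  -- nets
  have hnets : ∀ k : ℕ, ∃ P : Finset X, P.card ≤ N^7 ∧
      ∀ y, dist z y < 4 * s k → ∃ c ∈ P, dist c y < s k / 32 := by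
    intro k
    obtain ⟨P, hcard, hcov⟩ := cover_lemma hN 7 z (s k / 32)
    refine ⟨P, hcard, ?_⟩
    intro y hy
    have hy' : y ∈ {y : X | dist z y < 2^7 * (s k / 32)} := by
      simp only [mem_setOf_eq]
      calc dist z y < 4 * s k := hy
        _ = 2^7 * (s k / 32) := by ring
    obtain ⟨c, hc, hcy⟩ := by simpa only [Set.mem_iUnion, exists_prop] using hcov hy'
    exact ⟨c, hc, hcy⟩
  set P : ℕ → Finset X := fun k => (hnets k).choose with hPdef
  have hPcard : ∀ k, ((P k).card : ℝ) ≤ M := by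
    intro k
    have := (hnets k).choose_spec.1
    rw [hMdef]
    exact_mod_cast this
  have hPcov : ∀ k, ∀ y, dist z y < 4 * s k → ∃ c ∈ P k, dist c y < s k / 32 :=
    fun k => (hnets k).choose_spec.2
  -- building blocks
  have hθex : ∀ (k : ℕ) (c : X), s k / 2 ≤ dist z c →
      ∃ f ∈ rf.F, (∀ y, 0 ≤ f y ∧ f y ≤ 1) ∧ f z = 0 ∧ f c = 1 ∧
        rf.E f f ≤ 4 / s k := by
    intro k c hc
    have hzc : z ≠ c := by
      intro h
      rw [← h, dist_self] at hc
      have := hs0 k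
      linarith
    obtain ⟨ψ, hψF, hψ01, hψz, hψc, hψE⟩ := near_min rf hR hzc
    refine ⟨(fun _ => (1:ℝ)) - ψ, rf.sub_mem (rf.const_mem 1) hψF, ?_, ?_, ?_, ?_⟩
    · intro y
      constructor
      · simp only [Pi.sub_apply]
        linarith [(hψ01 y).2]
      · simp only [Pi.sub_apply]
        linarith [(hψ01 y).1]
    · simp [hψz]
    · simp [hψc]
    · have heq : rf.E ((fun _ => (1:ℝ)) - ψ) ((fun _ => (1:ℝ)) - ψ) = rf.E ψ ψ := by
        have h1 : (fun _ => (1:ℝ)) - ψ = ((-1:ℝ) • ψ) + (fun _ => (1:ℝ)) := by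
          funext y; simp [sub_eq_add_neg]; ring
        rw [h1, rf.E_add_const (rf.smul_mem _ hψF), rf.E_smul_self _ hψF]
        ring
      rw [heq]
      have hd0 : 0 < dist z c := lt_of_lt_of_le (by linarith [hs0 k]) hc
      calc rf.E ψ ψ ≤ 2 / dist z c := hψE
        _ ≤ 2 / (s k / 2) := by
            apply div_le_div_of_nonneg_left (by norm_num) (by linarith [hs0 k]) hc
        _ = 4 / s k := by
            field_simp
            norm_num
  set θ : ℕ → X → (X → ℝ) := fun k c =>
    if h : s k / 2 ≤ dist z c then (hθex k c h).choose else 0 with hθdef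
  have hθcases : ∀ k c, (∀ h : s k / 2 ≤ dist z c, θ k c = (hθex k c h).choose) ∧
      (¬ (s k / 2 ≤ dist z c) → θ k c = 0) :=
    fun k c => ⟨fun h => dif_pos h, fun h => dif_neg h⟩
  have hθmem : ∀ k c, θ k c ∈ rf.F := by
    intro k c
    by_cases h : s k / 2 ≤ dist z c
    · rw [(hθcases k c).1 h]; exact (hθex k c h).choose_spec.1
    · rw [(hθcases k c).2 h]; exact rf.zero_mem
  have hθ01 : ∀ k c y, 0 ≤ θ k c y ∧ θ k c y ≤ 1 := by
    intro k c y
    by_cases h : s k / 2 ≤ dist z c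
    · rw [(hθcases k c).1 h]; exact (hθex k c h).choose_spec.2.1 y
    · rw [(hθcases k c).2 h]; simp
  have hθz : ∀ k c, θ k c z = 0 := by
    intro k c
    by_cases h : s k / 2 ≤ dist z c
    · rw [(hθcases k c).1 h]; exact (hθex k c h).choose_spec.2.2.1
    · rw [(hθcases k c).2 h]; simp
  have hθE : ∀ k c, rf.E (θ k c) (θ k c) ≤ 4 / s k := by
    intro k c
    by_cases h : s k / 2 ≤ dist z c
    · rw [(hθcases k c).1 h]; exact (hθex k c h).choose_spec.2.2.2.2
    · rw [(hθcases k c).2 h]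
      rw [rf.E_zero]
      positivity
  have hθnm : ∀ k c, rf.nm (θ k c) ≤ 2 / Real.sqrt (s k) := by
    intro k c
    apply rf.nm_le_of_E_le_sq (by positivity)
    have : (2 / Real.sqrt (s k))^2 = 4 / s k := by
      rw [div_pow, Real.sq_sqrt (hs0 k).le]
      norm_num
    rw [this]
    exact hθE k c
  have hθinner : ∀ k c y, dist z y ≤ ρ → θ k c y ≤ 2 * Real.sqrt ρ / Real.sqrt (s k) := by
    intro k c y hy
    have hh := rf.holder hR (hθmem k c) y z
    rw [hθz k c, sub_zero, dist_comm y z] at hh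
    have h1 : θ k c y ^ 2 ≤ 4 * ρ / s k := by
      calc θ k c y ^ 2 ≤ dist z y * rf.E (θ k c) (θ k c) := hh
        _ ≤ ρ * (4 / s k) := by
            apply mul_le_mul hy (hθE k c) (rf.nonneg _ (hθmem k c)) hρ.le
        _ = 4 * ρ / s k := by ring
    have hb : (2 * Real.sqrt ρ / Real.sqrt (s k))^2 = 4 * ρ / s k := by
      rw [div_pow, mul_pow, Real.sq_sqrt hρ.le, Real.sq_sqrt (hs0 k).le]
      norm_num
    have h2 : θ k c y ^ 2 ≤ (2 * Real.sqrt ρ / Real.sqrt (s k))^2 := by rw [hb]; exact h1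
    calc θ k c y ≤ |θ k c y| := le_abs_self _
      _ = Real.sqrt (θ k c y ^ 2) := (Real.sqrt_sq_eq_abs _).symm
      _ ≤ Real.sqrt ((2 * Real.sqrt ρ / Real.sqrt (s k))^2) := Real.sqrt_le_sqrt h2
      _ = 2 * Real.sqrt ρ / Real.sqrt (s k) := Real.sqrt_sq (by positivity)
  -- shell sums
  set g : ℕ → (X → ℝ) := fun k => ∑ c ∈ P k, θ k c with hgdef
  have hgmem : ∀ k, g k ∈ rf.F := fun k => rf.mem_sum (fun c _ => hθmem k c)
  have hgapply : ∀ k y, g k y = ∑ c ∈ P k, θ k c y := by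
    intro k y
    rw [hgdef]
    exact Finset.sum_apply y (P k) _
  have hg0 : ∀ k y, 0 ≤ g k y := by
    intro k y
    rw [hgapply]
    exact Finset.sum_nonneg fun c _ => (hθ01 k c y).1
  have hgz : ∀ k, g k z = 0 := by
    intro k
    rw [hgapply]
    exact Finset.sum_eq_zero fun c _ => hθz k c
  have hgnm : ∀ k, rf.nm (g k) ≤ (2 * M / Real.sqrt (Λ * ρ)) * ((2:ℝ)^k)⁻¹ := by
    intro k
    calc rf.nm (g k) ≤ ∑ c ∈ P k, rf.nm (θ k c) := rf.nm_sum_le (fun c _ => hθmem k c)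
      _ ≤ ∑ _c ∈ P k, 2 / Real.sqrt (s k) := Finset.sum_le_sum fun c _ => hθnm k c
      _ = ((P k).card : ℝ) * (2 / Real.sqrt (s k)) := by
          rw [Finset.sum_const, nsmul_eq_mul]
      _ ≤ M * (2 / Real.sqrt (s k)) := by
          apply mul_le_mul_of_nonneg_right (hPcard k) (by positivity)
      _ = (2 * M / Real.sqrt (Λ * ρ)) * ((2:ℝ)^k)⁻¹ := by
          rw [hsqrts k]
          field_simp
  have hginner : ∀ k y, dist z y ≤ ρ →
      g k y ≤ (2 * M * Real.sqrt ρ / Real.sqrt (Λ * ρ)) * ((2:ℝ)^k)⁻¹ := by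
    intro k y hy
    rw [hgapply]
    calc ∑ c ∈ P k, θ k c y ≤ ∑ _c ∈ P k, 2 * Real.sqrt ρ / Real.sqrt (s k) :=
          Finset.sum_le_sum fun c _ => hθinner k c y hy
      _ = ((P k).card : ℝ) * (2 * Real.sqrt ρ / Real.sqrt (s k)) := by
          rw [Finset.sum_const, nsmul_eq_mul]
      _ ≤ M * (2 * Real.sqrt ρ / Real.sqrt (s k)) := by
          apply mul_le_mul_of_nonneg_right (hPcard k) (by positivity)
      _ = (2 * M * Real.sqrt ρ / Real.sqrt (Λ * ρ)) * ((2:ℝ)^k)⁻¹ := by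
          rw [hsqrts k]
          field_simp
  have hgouter : ∀ k w, s k ≤ dist z w → dist z w < 4 * s k → 1/2 ≤ g k w := by
    intro k w hw1 hw2
    obtain ⟨c, hc, hcw⟩ := hPcov k w hw2
    have hact : s k / 2 ≤ dist z c := by
      have htri : dist z w ≤ dist z c + dist c w := dist_triangle z c w
      have := hs0 k
      linarith
    have hval : 1/2 ≤ θ k c w := by
      have hth : θ k c = (hθex k c hact).choose := (hθcases k c).1 hact
      have hspec := (hθex k c hact).choose_spec
      have hh := rf.holder hR (hθmem k c) w c
      have hcval : θ k c c = 1 := by rw [hth]; exact hspec.2.2.2.1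
      rw [hcval] at hh
      have hE := hθE k c
      have hle : (θ k c w - 1)^2 ≤ 1/8 := by
        calc (θ k c w - 1)^2 ≤ dist w c * rf.E (θ k c) (θ k c) := hh
          _ ≤ (s k / 32) * (4 / s k) := by
              apply mul_le_mul (le_of_lt (dist_comm w c ▸ hcw)) hE
                (rf.nonneg _ (hθmem k c)) (by linarith [hs0 k])
          _ = 1/8 := by
              have hsk := (hs0 k).ne'
              field_simp
              ring
      nlinarith [hle]
    calc (1:ℝ)/2 ≤ θ k c w := hval
      _ ≤ ∑ c' ∈ P k, θ k c' w := Finset.single_le_sum (fun c' _ => (hθ01 k c' w).1) hc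
      _ = g k w := (hgapply k w).symm
  -- partial sums
  set S : ℕ → (X → ℝ) := fun n => ∑ k ∈ Finset.range (n+1), g k with hSdef
  have hSmem : ∀ n, S n ∈ rf.F := fun n => rf.mem_sum (fun k _ => hgmem k)
  have hSapply : ∀ n y, S n y = ∑ k ∈ Finset.range (n+1), g k y := by
    intro n y
    rw [hSdef]
    exact Finset.sum_apply y _ _
  have hSz : ∀ n, S n z = 0 := by
    intro n
    rw [hSapply]
    exact Finset.sum_eq_zero fun k _ => hgz k
  set D : ℝ := 2 * M / Real.sqrt (Λ * ρ) with hDdef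
  have hD0 : 0 < D := by positivity
  have hSdiff : ∀ m n, m ≤ n → rf.nm (S n - S m) ≤ D * (2 * ((2:ℝ)^(m+1))⁻¹) := by
    intro m n hmn
    have heq : S n - S m = ∑ k ∈ Finset.Ico (m+1) (n+1), g k := by
      have h := Finset.sum_Ico_eq_sub g (show m+1 ≤ n+1 by omega)
      rw [h]
    rw [heq]
    calc rf.nm (∑ k ∈ Finset.Ico (m+1) (n+1), g k)
        ≤ ∑ k ∈ Finset.Ico (m+1) (n+1), rf.nm (g k) := rf.nm_sum_le (fun k _ => hgmem k)
      _ ≤ ∑ k ∈ Finset.Ico (m+1) (n+1), D * ((2:ℝ)^k)⁻¹ :=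
          Finset.sum_le_sum fun k _ => hgnm k
      _ = D * ∑ k ∈ Finset.Ico (m+1) (n+1), ((2:ℝ)^k)⁻¹ := by rw [Finset.mul_sum]
      _ ≤ D * (2 * ((2:ℝ)^(m+1))⁻¹) := by
          apply mul_le_mul_of_nonneg_left _ hD0.le
          exact geo_sum (m+1) (n+1)
  have hSnm : ∀ n, rf.nm (S n) ≤ 2 * D := by
    intro n
    calc rf.nm (S n) ≤ ∑ k ∈ Finset.range (n+1), rf.nm (g k) :=
          rf.nm_sum_le (fun k _ => hgmem k)
      _ ≤ ∑ k ∈ Finset.range (n+1), D * ((2:ℝ)^k)⁻¹ := Finset.sum_le_sum fun k _ => hgnm k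
      _ = D * ∑ k ∈ Finset.Ico 0 (n+1), ((2:ℝ)^k)⁻¹ := by
          rw [Finset.mul_sum, Finset.range_eq_Ico]
      _ ≤ D * (2 * ((2:ℝ)^0)⁻¹) := by
          apply mul_le_mul_of_nonneg_left (geo_sum 0 (n+1)) hD0.le
      _ = 2 * D := by rw [pow_zero, inv_one, mul_one, mul_comm]
  -- Cauchy and limit
  have hcauchy : ∀ ε : ℝ, 0 < ε → ∃ n₀ : ℕ, ∀ m ≥ n₀, ∀ n ≥ n₀,
      rf.E (S m - S n) (S m - S n) < ε := by
    intro ε hε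
    obtain ⟨n₀, hn₀⟩ := pow_unbounded_of_one_lt (2 * D / Real.sqrt ε) (by norm_num : (1:ℝ) < 2)
    refine ⟨n₀, ?_⟩
    have key : ∀ m n, m ≤ n → m ≥ n₀ → rf.E (S n - S m) (S n - S m) < ε := by
      intro m n hmn hm
      have h1 := hSdiff m n hmn
      have h2 : D * (2 * ((2:ℝ)^(m+1))⁻¹) < Real.sqrt ε := by
        have hpow : (2:ℝ)^n₀ ≤ (2:ℝ)^(m+1) := by
          apply pow_le_pow_right₀ (by norm_num) (by omega)
        have hp0 : (0:ℝ) < (2:ℝ)^(m+1) := by positivity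
        have hsε : 0 < Real.sqrt ε := Real.sqrt_pos.2 hε
        rw [div_lt_iff₀ hsε] at hn₀
        have h3 : 2 * D < Real.sqrt ε * (2:ℝ)^(m+1) := by
          calc 2 * D < (2:ℝ)^n₀ * Real.sqrt ε := hn₀
            _ ≤ (2:ℝ)^(m+1) * Real.sqrt ε := mul_le_mul_of_nonneg_right hpow hsε.le
            _ = Real.sqrt ε * (2:ℝ)^(m+1) := mul_comm _ _
        have h4 : 2 * D / (2:ℝ)^(m+1) < Real.sqrt ε := (div_lt_iff₀ hp0).2 h3
        calc D * (2 * ((2:ℝ)^(m+1))⁻¹) = 2 * D / (2:ℝ)^(m+1) := by ring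
          _ < Real.sqrt ε := h4
      have h4 : rf.nm (S n - S m) < Real.sqrt ε := lt_of_le_of_lt h1 h2
      have h5 : rf.E (S n - S m) (S n - S m) < Real.sqrt ε ^ 2 := by
        have := rf.nm_sq (rf.sub_mem (hSmem n) (hSmem m))
        nlinarith [rf.nm_nonneg (S n - S m)]
      rwa [Real.sq_sqrt hε.le] at h5
    intro m hm n hn
    rcases le_total m n with h | h
    · rw [rf.E_sub_symm (hSmem m) (hSmem n)]
      exact key m n h hm
    · exact key n m h hn
  obtain ⟨v, hvF, hconv⟩ := rf.complete S hSmem hcauchy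
  set V : X → ℝ := v - (fun _ => v z) with hVdef
  have hVmem : V ∈ rf.F := rf.sub_mem hvF (rf.const_mem _)
  have hVE : rf.E V V = rf.E v v := by
    have h1 : V = v + (fun _ => -(v z)) := by
      funext y; simp [hVdef, sub_eq_add_neg]
    rw [h1, rf.E_add_const hvF]
  -- pointwise approximation
  have happrox : ∀ y : X, ∀ δ : ℝ, 0 < δ → ∃ n₀ : ℕ, ∀ n ≥ n₀, |V y - S n y| < δ := by
    intro y δ hδ
    set ε : ℝ := δ^2 / (dist z y + 1) with hεdef
    have hdzy : (0:ℝ) ≤ dist z y := dist_nonneg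
    have hε : 0 < ε := by positivity
    obtain ⟨n₀, hn₀⟩ := hconv ε hε
    refine ⟨n₀, fun n hn => ?_⟩
    have hE := hn₀ n hn
    have hh := rf.holder hR (rf.sub_mem hvF (hSmem n)) y z
    have hyz : (v - S n) y - (v - S n) z = V y - S n y := by
      have h0 : V y = v y - v z := Pi.sub_apply v _ y
      have h1 : (v - S n) y = v y - S n y := Pi.sub_apply v (S n) y
      have h2 : (v - S n) z = v z - S n z := Pi.sub_apply v (S n) z
      rw [h1, h2, h0, hSz n]
      ring
    rw [hyz, dist_comm y z] at hh
    have h1 : (V y - S n y)^2 ≤ dist z y * rf.E (v - S n) (v - S n) := hh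
    have h2 : dist z y * rf.E (v - S n) (v - S n) < δ^2 := by
      calc dist z y * rf.E (v - S n) (v - S n) ≤ dist z y * ε := by
            apply mul_le_mul_of_nonneg_left hE.le hdzy
        _ = δ^2 * (dist z y / (dist z y + 1)) := by rw [hεdef]; ring
        _ < δ^2 * 1 := by
            apply mul_lt_mul_of_pos_left _ (by positivity)
            rw [div_lt_one (by linarith)]
            linarith
        _ = δ^2 := mul_one _
    nlinarith [abs_nonneg (V y - S n y), sq_abs (V y - S n y)]
  -- inner bound for V
  have hSinner : ∀ n y, dist z y ≤ ρ → S n y ≤ 1/4 := by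
    intro n y hy
    have hkey : (2 * M * Real.sqrt ρ / Real.sqrt (Λ * ρ)) * 2 = 1/4 := by
      have h1 : Real.sqrt (Λ * ρ) = 16 * M * Real.sqrt ρ := by
        rw [Real.sqrt_mul hΛ0.le]
        have : Real.sqrt Λ = 16 * M := by
          rw [hΛdef]
          have : 256 * M^2 = (16*M)^2 := by ring
          rw [this, Real.sqrt_sq (by positivity)]
        rw [this]
      rw [h1]
      have hsρ : 0 < Real.sqrt ρ := Real.sqrt_pos.2 hρ
      field_simp
      ring
    rw [hSapply]
    calc ∑ k ∈ Finset.range (n+1), g k y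
        ≤ ∑ k ∈ Finset.range (n+1),
            (2 * M * Real.sqrt ρ / Real.sqrt (Λ * ρ)) * ((2:ℝ)^k)⁻¹ :=
          Finset.sum_le_sum fun k _ => hginner k y hy
      _ = (2 * M * Real.sqrt ρ / Real.sqrt (Λ * ρ)) *
            ∑ k ∈ Finset.Ico 0 (n+1), ((2:ℝ)^k)⁻¹ := by
          rw [Finset.mul_sum, Finset.range_eq_Ico]
      _ ≤ (2 * M * Real.sqrt ρ / Real.sqrt (Λ * ρ)) * (2 * ((2:ℝ)^0)⁻¹) := by
          apply mul_le_mul_of_nonneg_left (geo_sum 0 (n+1)) (by positivity)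
      _ = (2 * M * Real.sqrt ρ / Real.sqrt (Λ * ρ)) * 2 := by
          rw [pow_zero, inv_one, mul_one]
      _ = 1/4 := hkey
  have hVinner : ∀ y, dist z y ≤ ρ → V y ≤ 1/4 := by
    intro y hy
    by_contra hcon
    push_neg at hcon
    obtain ⟨n₀, hn₀⟩ := happrox y (V y - 1/4) (by linarith)
    have h1 := hn₀ n₀ le_rfl
    have h2 := hSinner n₀ y hy
    have h3 : V y - S n₀ y ≤ |V y - S n₀ y| := le_abs_self _
    linarith
  -- outer bound for V
  have hVouter : ∀ w, Λ * ρ ≤ dist z w → 1/2 ≤ V w := by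
    intro w hw
    -- find the shell index
    have hPr0 : s 0 ≤ dist z w := by
      show Λ * ρ * 4 ^ 0 ≤ dist z w
      simpa using hw
    set B : ℕ := ⌈dist z w / (Λ * ρ)⌉₊ with hBdef
    have hPrbound : ∀ j, s j ≤ dist z w → j ≤ B := by
      intro j hj
      have h1 : (4:ℝ)^j ≤ dist z w / (Λ * ρ) := by
        rw [le_div_iff₀ (by positivity)]
        calc (4:ℝ)^j * (Λ * ρ) = Λ * ρ * 4^j := by ring
          _ ≤ dist z w := hj
      have h2 : (j:ℝ) < (4:ℝ)^j := by
        have := Nat.lt_pow_self (n := j) (by norm_num : 1 < 4)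
        exact_mod_cast this
      have h3 : (j:ℝ) ≤ (B:ℝ) := by
        calc (j:ℝ) ≤ (4:ℝ)^j := h2.le
          _ ≤ dist z w / (Λ * ρ) := h1
          _ ≤ (B:ℝ) := Nat.le_ceil _
      exact_mod_cast h3
    letI : DecidablePred (fun j : ℕ => s j ≤ dist z w) := Classical.decPred _
    have hex : ∃ k : ℕ, s k ≤ dist z w ∧ dist z w < 4 * s k := by
      refine ⟨Nat.findGreatest (fun j : ℕ => s j ≤ dist z w) B, ?_, ?_⟩
      · exact Nat.findGreatest_spec (P := fun j : ℕ => s j ≤ dist z w) (Nat.zero_le B) hPr0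
      · have hnot : ¬ (s (Nat.findGreatest (fun j : ℕ => s j ≤ dist z w) B + 1) ≤ dist z w) := by
          by_cases hkB : Nat.findGreatest (fun j : ℕ => s j ≤ dist z w) B + 1 ≤ B
          · exact Nat.findGreatest_is_greatest (P := fun j : ℕ => s j ≤ dist z w)
              (Nat.lt_succ_self _) hkB
          · intro hcon
            exact hkB (hPrbound _ hcon)
        have hlt := not_le.1 hnot
        calc dist z w < s (Nat.findGreatest (fun j : ℕ => s j ≤ dist z w) B + 1) := hlt
          _ = 4 * s (Nat.findGreatest (fun j : ℕ => s j ≤ dist z w) B) := by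
              show Λ * ρ * 4 ^ (Nat.findGreatest (fun j : ℕ => s j ≤ dist z w) B + 1) = _
              rw [pow_succ]; ring
    obtain ⟨k, hPk, hupper⟩ := hex
    have hgk := hgouter k w hPk hupper
    by_contra hcon
    push_neg at hcon
    obtain ⟨n₀, hn₀⟩ := happrox w (1/2 - V w) (by linarith)
    set n : ℕ := max n₀ k with hndef
    have h1 := hn₀ n (le_max_left _ _)
    have h2 : g k w ≤ S n w := by
      rw [hSapply]
      apply Finset.single_le_sum (fun k' _ => hg0 k' w)
      rw [Finset.mem_range]
      have := le_max_right n₀ k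
      omega
    have h3 : S n w - V w ≤ |V w - S n w| := by
      rw [abs_sub_comm]
      exact le_abs_self _
    linarith
  -- energy of v
  have hEv : rf.E v v ≤ (2*D)^2 := by
    have hnm : rf.nm v ≤ 2 * D := by
      apply le_of_forall_pos_le_add
      intro ε hε
      obtain ⟨n₀, hn₀⟩ := hconv (ε^2) (by positivity)
      have h1 := hn₀ n₀ le_rfl
      have h2 : rf.nm (v - S n₀) ≤ ε := by
        apply rf.nm_le_of_E_le_sq hε.le h1.le
      have h3 : v = (v - S n₀) + S n₀ := by ring
      calc rf.nm v = rf.nm ((v - S n₀) + S n₀) := by rw [← h3]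
        _ ≤ rf.nm (v - S n₀) + rf.nm (S n₀) :=
            rf.nm_add_le (rf.sub_mem hvF (hSmem n₀)) (hSmem n₀)
        _ ≤ ε + 2 * D := add_le_add h2 (hSnm n₀)
        _ = 2 * D + ε := by ring
    exact rf.E_le_sq_of_nm_le hvF hnm
  have hEV : rf.E V V ≤ 1 / (16 * ρ) := by
    rw [hVE]
    calc rf.E v v ≤ (2*D)^2 := hEv
      _ = 16 * M^2 / (Real.sqrt (Λ*ρ))^2 := by rw [hDdef]; ring
      _ = 16 * M^2 / (Λ * ρ) := by rw [Real.sq_sqrt (by positivity)]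
      _ = 1 / (16 * ρ) := by
          rw [hΛdef]
          have hM' : M ≠ 0 := ne_of_gt hM0
          field_simp
          ring
  -- final cutoff
  set W0 : X → ℝ := ((-4:ℝ) • V) + (fun _ => (2:ℝ)) with hW0def
  have hW0mem : W0 ∈ rf.F := rf.add_mem (rf.smul_mem _ hVmem) (rf.const_mem 2)
  have hW0apply : ∀ y, W0 y = 2 - 4 * V y := by
    intro y
    simp [hW0def]
    ring
  have hW0E : rf.E W0 W0 ≤ 1/ρ := by
    rw [hW0def, rf.E_add_const (rf.smul_mem _ hVmem), rf.E_smul_self _ hVmem]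
    calc (-4:ℝ)^2 * rf.E V V ≤ 16 * (1 / (16 * ρ)) := by
          have h := hEV
          nlinarith [hEV]
      _ = 1/ρ := by field_simp
  refine ⟨tr W0, tr_mem rf hW0mem, fun y => ⟨tr_nonneg _ y, tr_le_one _ y⟩, ?_, ?_, ?_⟩
  · intro y hy
    apply tr_eq_one
    rw [hW0apply]
    have := hVinner y hy
    linarith
  · intro y hy
    apply tr_eq_zero
    rw [hW0apply]
    have h1 : Λ * ρ ≤ dist z y := by
      calc Λ * ρ = 256 * ((N:ℝ)^7)^2 * ρ := by rw [hΛdef, hMdef]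
        _ ≤ dist z y := hy
    have := hVouter y h1
    linarith
  · exact le_trans (tr_E_le rf hW0mem) hW0E

end RFAux

set_option maxHeartbeats 1000000 in
/-- If the resistance metric `R` is complete and doubling, then there
is `C > 0` with `𝓡(cl B(x,r), B(x,2r)ᶜ) ≥ C·r` for every `x ∈ X` and `r > 0`. -/
theorem setRes_closure_ball_lower {X : Type*} [MetricSpace X] [CompleteSpace X]
    (rf : ResistanceForm X) (hR : ∀ x y : X, dist x y = rf.rmetric x y)
    (hdb : DoublingOf fun x y : X => dist x y) :
    ∃ C : ℝ, 0 < C ∧ ∀ (x : X) (r : ℝ), 0 < r →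
      ENNReal.ofReal (C * r) ≤
        rf.setRes (closure (Metric.ball x r)) (Metric.ball x (2 * r))ᶜ := by
  classical
  obtain ⟨N, hN'⟩ := hdb
  have hN : ∀ (x : X) (r : ℝ), ∃ s : Finset X, s.card ≤ N ∧
      {y : X | dist x y < 2 * r} ⊆ ⋃ z ∈ s, {y : X | dist z y < r} := hN'
  set ΛN : ℕ := 256 * (N^7)^2 with hΛNdef
  set Ncard : ℕ := N ^ (ΛN + 2) with hNcdef
  set K : ℝ := (Ncard:ℝ)^2 * 2^(ΛN+1) with hKdef
  have hK0 : 0 ≤ K := by rw [hKdef]; positivity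
  refine ⟨1/(K+1), by positivity, ?_⟩
  intro x r hr
  -- the key cutoff function
  have hρ' : (0:ℝ) < r / 2^(ΛN+1) := by positivity
  set ρ' : ℝ := r / 2^(ΛN+1) with hρ'def
  have hΛreal : (256 * ((N:ℝ)^7)^2) = (ΛN : ℝ) := by rw [hΛNdef]; push_cast; ring
  have hΛρ' : ((ΛN:ℝ) + 1) * ρ' ≤ r := by
    rw [hρ'def]
    rw [div_eq_mul_inv, ← mul_assoc]
    have h2 : ((ΛN:ℝ) + 1) ≤ 2^(ΛN+1) := by
      have h3 : ΛN + 1 ≤ 2^(ΛN+1) := by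
        have := Nat.lt_two_pow_self (n := ΛN)
        have h4 : (2:ℕ)^ΛN ≤ 2^(ΛN+1) := Nat.pow_le_pow_right (by norm_num) (by omega)
        omega
      exact_mod_cast h3
    have hpow : (0:ℝ) < 2^(ΛN+1) := by positivity
    calc ((ΛN:ℝ) + 1) * r * ((2:ℝ)^(ΛN+1))⁻¹ ≤ 2^(ΛN+1) * r * ((2:ℝ)^(ΛN+1))⁻¹ := by
          apply mul_le_mul_of_nonneg_right (mul_le_mul_of_nonneg_right h2 hr.le) (by positivity)
      _ = r := by field_simp
  -- cover the ball of radius 2r by balls of radius ρ'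
  obtain ⟨Q, hQcard, hQcov⟩ := RFAux.cover_lemma hN (ΛN + 2) x ρ'
  have hQcov' : ∀ y, dist x y < 2 * r → ∃ c ∈ Q, dist c y < ρ' := by
    intro y hy
    have hy' : y ∈ {y : X | dist x y < 2^(ΛN+2) * ρ'} := by
      simp only [mem_setOf_eq]
      have : (2:ℝ)^(ΛN+2) * ρ' = 2 * r := by
        rw [hρ'def, pow_succ]
        field_simp
      rw [this]
      exact hy
    obtain ⟨c, hc, hcy⟩ := by simpa only [Set.mem_iUnion, exists_prop] using hQcov hy'
    exact ⟨c, hc, hcy⟩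
  -- per-center cutoffs
  have hwex : ∀ c : X, dist x c ≤ r + ρ' →
      ∃ f ∈ rf.F, (∀ y, 0 ≤ f y ∧ f y ≤ 1) ∧ (∀ y, dist c y ≤ ρ' → f y = 1) ∧
        (∀ y, (256 * ((N:ℝ)^7)^2) * ρ' ≤ dist c y → f y = 0) ∧ rf.E f f ≤ 1/ρ' :=
    fun c _ => RFAux.cutoffA rf hR hN c hρ'
  set w : X → (X → ℝ) := fun c =>
    if h : dist x c ≤ r + ρ' then (hwex c h).choose else 0 with hwdef
  have hwcases : ∀ c, (∀ h : dist x c ≤ r + ρ', w c = (hwex c h).choose) ∧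
      (¬ (dist x c ≤ r + ρ') → w c = 0) :=
    fun c => ⟨fun h => dif_pos h, fun h => dif_neg h⟩
  have hwmem : ∀ c, w c ∈ rf.F := by
    intro c
    by_cases h : dist x c ≤ r + ρ'
    · rw [(hwcases c).1 h]; exact (hwex c h).choose_spec.1
    · rw [(hwcases c).2 h]; exact rf.zero_mem
  have hw0 : ∀ c y, 0 ≤ w c y := by
    intro c y
    by_cases h : dist x c ≤ r + ρ'
    · rw [(hwcases c).1 h]; exact ((hwex c h).choose_spec.2.1 y).1
    · rw [(hwcases c).2 h]; simp
  have hwE : ∀ c, rf.E (w c) (w c) ≤ 1/ρ' := by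
    intro c
    by_cases h : dist x c ≤ r + ρ'
    · rw [(hwcases c).1 h]; exact (hwex c h).choose_spec.2.2.2.2
    · rw [(hwcases c).2 h]; rw [rf.E_zero]; positivity
  have hwouter : ∀ c y, 2 * r ≤ dist x y → w c y = 0 := by
    intro c y hy
    by_cases h : dist x c ≤ r + ρ'
    · rw [(hwcases c).1 h]
      apply (hwex c h).choose_spec.2.2.2.1
      rw [hΛreal]
      have htri : dist x y ≤ dist x c + dist c y := dist_triangle x c y
      have : (ΛN:ℝ) * ρ' ≤ r - ρ' := by
        have := hΛρ'
        nlinarith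
      linarith
    · rw [(hwcases c).2 h]; simp
  -- the global cutoff
  set u0 : X → ℝ := ∑ c ∈ Q, w c with hu0def
  have hu0mem : u0 ∈ rf.F := rf.mem_sum (fun c _ => hwmem c)
  have hu0apply : ∀ y, u0 y = ∑ c ∈ Q, w c y := by
    intro y
    rw [hu0def]
    exact Finset.sum_apply y Q w
  set u : X → ℝ := RFAux.tr u0 with hudef
  have humem : u ∈ rf.F := RFAux.tr_mem rf hu0mem
  have hu1 : ∀ y ∈ closure (Metric.ball x r), u y = 1 := by
    intro y hy
    have hyr : dist x y ≤ r := by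
      have := Metric.closure_ball_subset_closedBall hy
      rw [Metric.mem_closedBall] at this
      rw [dist_comm]
      exact this
    obtain ⟨c, hc, hcy⟩ := hQcov' y (by linarith)
    have hact : dist x c ≤ r + ρ' := by
      have htri : dist x c ≤ dist x y + dist y c := dist_triangle x y c
      rw [dist_comm y c] at htri
      linarith
    have hval : w c y = 1 := by
      rw [(hwcases c).1 hact]
      exact (hwex c hact).choose_spec.2.2.1 y hcy.le
    apply RFAux.tr_eq_one
    rw [hu0apply]
    calc (1:ℝ) = w c y := hval.symm
      _ ≤ ∑ c' ∈ Q, w c' y := Finset.single_le_sum (fun c' _ => hw0 c' y) hc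
  have hu0' : ∀ y ∈ (Metric.ball x (2*r))ᶜ, u y = 0 := by
    intro y hy
    have hyr : 2 * r ≤ dist x y := by
      rw [Set.mem_compl_iff, Metric.mem_ball, not_lt, dist_comm] at hy
      exact hy
    apply RFAux.tr_eq_zero
    rw [hu0apply]
    have : ∑ c ∈ Q, w c y = 0 := Finset.sum_eq_zero fun c _ => hwouter c y hyr
    rw [this]
  have huE : rf.E u u ≤ (K+1)/r := by
    have hb : (0:ℝ) ≤ Real.sqrt (1/ρ') := Real.sqrt_nonneg _
    have hnm : ∀ c, rf.nm (w c) ≤ Real.sqrt (1/ρ') := by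
      intro c
      apply rf.nm_le_of_E_le_sq hb
      rw [Real.sq_sqrt (by positivity : (0:ℝ) ≤ 1/ρ')]
      exact hwE c
    have hnmu0 : rf.nm u0 ≤ (Ncard:ℝ) * Real.sqrt (1/ρ') := by
      calc rf.nm u0 ≤ ∑ c ∈ Q, rf.nm (w c) := rf.nm_sum_le (fun c _ => hwmem c)
        _ ≤ ∑ _c ∈ Q, Real.sqrt (1/ρ') := Finset.sum_le_sum fun c _ => hnm c
        _ = (Q.card : ℝ) * Real.sqrt (1/ρ') := by rw [Finset.sum_const, nsmul_eq_mul]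
        _ ≤ (Ncard:ℝ) * Real.sqrt (1/ρ') := by
            apply mul_le_mul_of_nonneg_right _ hb
            exact_mod_cast hQcard
    have hu0E : rf.E u0 u0 ≤ ((Ncard:ℝ) * Real.sqrt (1/ρ'))^2 :=
      rf.E_le_sq_of_nm_le hu0mem hnmu0
    have hcomp : ((Ncard:ℝ) * Real.sqrt (1/ρ'))^2 = K/r := by
      rw [mul_pow, Real.sq_sqrt (by positivity : (0:ℝ) ≤ 1/ρ'), hρ'def, hKdef]
      have h2 : (0:ℝ) < 2^(ΛN+1) := by positivity
      field_simp
    calc rf.E u u ≤ rf.E u0 u0 := RFAux.tr_E_le rf hu0mem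
      _ ≤ ((Ncard:ℝ) * Real.sqrt (1/ρ'))^2 := hu0E
      _ = K/r := hcomp
      _ ≤ (K+1)/r := by
          gcongr
          linarith
  -- now compute setRes
  by_cases hBne : ((Metric.ball x (2*r))ᶜ : Set X).Nonempty
  · have hAne : (closure (Metric.ball x r)).Nonempty :=
      ⟨x, subset_closure (Metric.mem_ball_self hr)⟩
    have hex : ∃ f ∈ rf.F, (∀ y ∈ closure (Metric.ball x r), f y = 1) ∧
        (∀ y ∈ (Metric.ball x (2*r))ᶜ, f y = 0) := ⟨u, humem, hu1, hu0'⟩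
    rw [ResistanceForm.setRes, if_pos ⟨hAne, hBne⟩, if_pos hex]
    set Sset : Set ℝ := {e : ℝ | ∃ f ∈ rf.F, (∀ y ∈ closure (Metric.ball x r), f y = 1) ∧
        (∀ y ∈ (Metric.ball x (2*r))ᶜ, f y = 0) ∧ rf.E f f = e} with hSsetdef
    have hmemS : rf.E u u ∈ Sset := ⟨u, humem, hu1, hu0', rfl⟩
    have hbdd : BddBelow Sset := by
      refine ⟨0, ?_⟩
      rintro e ⟨f, hf, -, -, rfl⟩
      exact rf.nonneg f hf
    have hsInf : sInf Sset ≤ (K+1)/r := le_trans (csInf_le hbdd hmemS) huE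
    rw [ENNReal.le_inv_iff_mul_le]
    calc ENNReal.ofReal (1/(K+1) * r) * ENNReal.ofReal (sInf Sset)
        ≤ ENNReal.ofReal (1/(K+1) * r) * ENNReal.ofReal ((K+1)/r) :=
          mul_le_mul_right (ENNReal.ofReal_le_ofReal hsInf) _
      _ = ENNReal.ofReal ((1/(K+1) * r) * ((K+1)/r)) :=
          (ENNReal.ofReal_mul (by positivity)).symm
      _ = ENNReal.ofReal 1 := by
          congr 1
          field_simp
      _ ≤ 1 := by simp
  · rw [ResistanceForm.setRes, if_neg (fun hcon => hBne hcon.2)]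
    exact le_top
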